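/- Let m ≥ 1, let F be a field of characteristic zero, set v = (1+u)^{m+1} u^{−m} ∈ F(u), and let u_0 = u, u_1, …, u_m be the m+1 distinct roots of (1+U)^{m+1} − v U^m in a splitting field over F(u). Then for every k ≥ 1, Σ_{i=0}^{m} Σ_{j=1}^{k} binom((m+1)k, k−j) u_i^{j} = v^k − binom((m+1)k, k). (Equivalently, with V(v) = Σ_{k≥1}(p_k/k) v^k z^k, L = Σ_{k≥1}(p_k/k) binom((m+1)k,k) z^k and K(x) = Σ_{k≥1}(p_k/k) z^k Σ_{j=1}^{k} binom((m+1)k,k−j) x^j, one has V(v) = L + Σ_{i=0}^{m} K(u_i).) -/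

import Mathlib

open Polynomial


lemma geom_Icc_mul {R : Type*} [CommRing R] (x : R) (k : ℕ) :
    (∑ j ∈ Finset.Icc 1 k, x ^ j) * (1 - x) = x - x ^ (k + 1) := by
  have h1 : ∑ j ∈ Finset.range (k+1), x ^ j = 1 + ∑ j ∈ Finset.Icc 1 k, x ^ j := by
    rw [Finset.range_eq_Ico, Finset.sum_eq_sum_Ico_succ_bot (by omega), ← Finset.Ico_add_one_right_eq_Icc]
    simp
  have h2 := geom_sum_mul x (k+1)
  rw [h1] at h2
  linear_combination (-1 : R) * h2

lemma choose_cast_eq {E : Type*} [Field E] [CharZero E] (m s : ℕ) (hs : 1 ≤ s) :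
    (((m+1)*s - 1).choose s : E) = (m : E) * (((m+1)*s - 1).choose (s-1) : E) := by
  have key : ((m+1)*s - 1).choose s * s = ((m+1)*s - 1).choose (s-1) * (m * s) := by
    obtain ⟨t, rfl⟩ : ∃ t, s = t + 1 := ⟨s - 1, by omega⟩
    have h := Nat.choose_succ_right_eq ((m+1)*(t+1) - 1) t
    have h2 : (m+1)*(t+1) - 1 - t = m * (t+1) := by
      have : (m+1)*(t+1) = m*(t+1) + (t+1) := by ring
      omega
    rw [h2] at h
    simpa using h
  have hs' : (s : E) ≠ 0 := Nat.cast_ne_zero.mpr (by omega)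
  have key' : ((((m+1)*s - 1).choose s : E)) * s
      = ((m : E) * ((((m+1)*s - 1).choose (s-1) : E))) * s := by
    have hc := congrArg (Nat.cast : ℕ → E) key
    push_cast at hc
    linear_combination hc
  exact mul_right_cancel₀ hs' key'

lemma derivative_finset_prod' {R : Type*} [CommRing R] {ι : Type*} [DecidableEq ι]
    (s : Finset ι) (f : ι → R[X]) :
    Polynomial.derivative (∏ i ∈ s, f i)
      = ∑ i ∈ s, (∏ l ∈ s.erase i, f l) * Polynomial.derivative (f i) := by
  induction s using Finset.induction_on with
  | empty => simp
  | insert _ _ ha ih =>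
    rename_i a s
    rw [Finset.prod_insert ha, Polynomial.derivative_mul, ih, Finset.sum_insert ha,
        Finset.erase_insert ha, Finset.mul_sum]
    congr 1
    · rw [mul_comm]
    · apply Finset.sum_congr rfl
      intro i hi
      rw [Finset.erase_insert_of_ne (by rintro rfl; exact ha hi),
          Finset.prod_insert (fun h => ha (Finset.mem_of_mem_erase h)), mul_assoc]

lemma series_core {E : Type*} [Field E] [CharZero E] (m k : ℕ) (hk : 1 ≤ k) (v : E)
    (S D B g : E[X])
    (hg : g = (1+X)^(m+1) - C v * X)
    (hD : D = C v * X - C ((m:E)+1) * (X * (1+X)^m))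
    (key1 : S * g = D - X^(k+1) * B) :
    (S * (1+X)^((m+1)*k)).coeff k = v^k - (((m+1)*k).choose k : E) := by
  classical
  set N := (m+1)*k with hN
  set σ : E[X] →+* PowerSeries E := Polynomial.coeToPowerSeries.ringHom with hσdef
  have hσapp : ∀ p : E[X], σ p = (p : PowerSeries E) := fun p => rfl
  have hσc : ∀ (p : E[X]) (n : ℕ), PowerSeries.coeff n (σ p) = p.coeff n := by
    intro p n; rw [hσapp]; exact Polynomial.coeff_coe p n
  have hσX : σ (X : E[X]) = PowerSeries.X := Polynomial.coe_X
  have hσC : ∀ a : E, σ (C a) = PowerSeries.C a := fun a => Polynomial.coe_C a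
  have hcc : ∀ p : E[X], PowerSeries.constantCoeff (σ p) = p.coeff 0 := by
    intro p
    rw [← PowerSeries.coeff_zero_eq_constantCoeff_apply]
    exact hσc p 0
  have hg0 : g.coeff 0 = 1 := by
    rw [hg]
    simp [Polynomial.coeff_one_add_X_pow]
  have hGu : σ g * (σ g)⁻¹ = 1 :=
    PowerSeries.mul_inv_cancel _ (by rw [hcc, hg0]; exact one_ne_zero)
  have hYu : σ (1+X) * (σ (1+X))⁻¹ = 1 :=
    PowerSeries.mul_inv_cancel _ (by rw [hcc]; simp)
  have zco : ∀ w : PowerSeries E, PowerSeries.coeff k (PowerSeries.X^(k+1) * w) = 0 := by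
    intro w
    rw [PowerSeries.coeff_X_pow_mul']
    simp
  have keyGD : g + D = (1+X)^m * (1 - C (m:E) * X) := by
    rw [hg, hD, pow_succ]
    have hCm : C ((m:E)+1) = C (m:E) + 1 := by simp
    rw [hCm]
    ring
  have key3 : g * (∑ r ∈ Finset.range (k+1), (C v * X)^r * ((1+X:E[X])^(m+1))^(k-r))
      = ((1+X:E[X])^(m+1))^(k+1) - (C v * X)^(k+1) := by
    have h := geom_sum₂_mul (C v * X) ((1+X:E[X])^(m+1)) (k+1)
    simp only [Nat.add_sub_cancel] at h
    rw [hg]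
    linear_combination -h
  -- step e0 : express σ S in terms of D, B
  have hS2 : σ S = (σ D - PowerSeries.X^(k+1) * σ B) * (σ g)⁻¹ := by
    have h := congrArg σ key1
    rw [map_mul, map_sub, map_mul, map_pow, hσX] at h
    rw [← h, mul_assoc, hGu, mul_one]
  -- abbreviation facts
  have hqY : ∀ M : ℕ, σ (1 - C (m:E) * X) * (σ ((1:E[X])+X))^M
      = σ ((1 - C (m:E) * X) * (1+X)^M) := by
    intro M; rw [map_mul, map_pow]
  have hDg : σ D = (σ ((1:E[X])+X))^m * σ (1 - C (m:E) * X) - σ g := by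
    rw [← map_pow, ← map_mul, ← map_sub]
    congr 1
    linear_combination keyGD
  have h3 := congrArg σ key3
  rw [map_mul, map_sub, map_pow, map_pow, map_pow, map_mul, hσX, hσC] at h3
  have hzero : ∀ s : ℕ, 1 ≤ s → ((1 - C (m:E) * X) * (1+X:E[X])^((m+1)*s - 1)).coeff s = 0 := by
    intro s hs
    rw [sub_mul, one_mul, mul_assoc, Polynomial.coeff_sub, Polynomial.coeff_C_mul]
    obtain ⟨t, rfl⟩ : ∃ t, s = t + 1 := ⟨s-1, by omega⟩
    rw [Polynomial.coeff_X_mul, Polynomial.coeff_one_add_X_pow, Polynomial.coeff_one_add_X_pow]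
    have hc := choose_cast_eq (E := E) m (t+1) (by omega)
    rw [Nat.add_sub_cancel] at hc
    rw [hc]
    ring
  have st3 : σ D * (σ g)⁻¹ * (σ ((1:E[X])+X))^N
      = σ (1 - C (m:E) * X) * (σ ((1:E[X])+X))^(N+m) * (σ g)⁻¹ - (σ ((1:E[X])+X))^N := by
    rw [hDg]
    linear_combination (-(σ ((1:E[X])+X))^N : PowerSeries E) * hGu
  have st4 : σ (1 - C (m:E) * X) * (σ ((1:E[X])+X))^(N+m) * (σ g)⁻¹
      = σ (1 - C (m:E) * X) * (σ ((1:E[X])+X))⁻¹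
          * σ (∑ r ∈ Finset.range (k+1), (C v * X)^r * ((1+X:E[X])^(m+1))^(k-r))
        + PowerSeries.X^(k+1) * (σ (1 - C (m:E) * X) * (σ ((1:E[X])+X))⁻¹
          * (PowerSeries.C v)^(k+1) * (σ g)⁻¹) := by
    have hexp : ((σ ((1:E[X])+X))^(m+1))^(k+1) = (σ ((1:E[X])+X))^(N+m+1) := by
      have hee : (m+1)*(k+1) = (m+1)*k+m+1 := by ring
      rw [← pow_mul, hN, hee]
    rw [hexp] at h3
    linear_combination (-(σ (1 - C (m:E) * X)) * (σ ((1:E[X])+X))⁻¹ * (σ g)⁻¹) * h3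
      + (σ (1 - C (m:E) * X) * (σ ((1:E[X])+X))⁻¹
          * σ (∑ r ∈ Finset.range (k+1), (C v * X)^r * ((1+X:E[X])^(m+1))^(k-r))) * hGu
      + (-(σ (1 - C (m:E) * X)) * (σ g)⁻¹ * (σ ((1:E[X])+X))^(N+m)) * hYu
  have hYN : PowerSeries.coeff k ((σ ((1:E[X])+X))^N) = (N.choose k : E) := by
    rw [← map_pow, hσc]
    exact Polynomial.coeff_one_add_X_pow E N k
  have eA : PowerSeries.coeff k (σ (1 - C (m:E) * X) * (σ ((1:E[X])+X))⁻¹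
      * σ (∑ r ∈ Finset.range (k+1), (C v * X)^r * ((1+X:E[X])^(m+1))^(k-r))) = v^k := by
    rw [map_sum, Finset.mul_sum, map_sum, Finset.sum_range_succ]
    have hlast : PowerSeries.coeff k (σ (1 - C (m:E) * X) * (σ ((1:E[X])+X))⁻¹
        * σ ((C v * X)^k * ((1+X:E[X])^(m+1))^(k-k))) = v^k := by
      have hzz : (C v * X : E[X])^k * ((1+X:E[X])^(m+1))^(k-k) = (C v * X)^k := by
        simp
      rw [hzz]
      have hform : σ (1 - C (m:E) * X) * (σ ((1:E[X])+X))⁻¹ * σ ((C v * X : E[X])^k)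
          = PowerSeries.C (v^k) * (PowerSeries.X^k
              * (σ (1 - C (m:E) * X) * (σ ((1:E[X])+X))⁻¹)) := by
        rw [map_pow, map_mul, hσX, hσC, map_pow (PowerSeries.C (R := E)) v k]
        ring
      rw [hform, PowerSeries.coeff_C_mul]
      have hxp := PowerSeries.coeff_X_pow_mul
        (σ (1 - C (m:E) * X) * (σ ((1:E[X])+X))⁻¹) k 0
      rw [Nat.zero_add] at hxp
      rw [hxp, PowerSeries.coeff_zero_eq_constantCoeff_apply, map_mul, hcc,
        PowerSeries.constantCoeff_inv, hcc]
      simp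
    rw [hlast]
    have hrest : ∑ r ∈ Finset.range k, PowerSeries.coeff k (σ (1 - C (m:E) * X)
        * (σ ((1:E[X])+X))⁻¹ * σ ((C v * X)^r * ((1+X:E[X])^(m+1))^(k-r))) = 0 := by
      apply Finset.sum_eq_zero
      intro r hr
      have hrk : r < k := Finset.mem_range.mp hr
      have hs1 : 1 ≤ k - r := by omega
      have hMe : (m+1)*(k-r) = ((m+1)*(k-r) - 1) + 1 := by
        have h1 : (m+1)*(k-r) ≠ 0 := Nat.mul_ne_zero (by omega) (by omega)
        omega
      have hpp : ((1+X:E[X])^(m+1))^(k-r) = (1+X)^((m+1)*(k-r) - 1) * (1+X) := by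
        rw [← pow_mul, hMe, pow_succ]
        rw [← hMe]
      have hform : σ (1 - C (m:E) * X) * (σ ((1:E[X])+X))⁻¹
            * σ ((C v * X)^r * ((1+X:E[X])^(m+1))^(k-r))
          = PowerSeries.C (v^r) * (PowerSeries.X^r
              * σ ((1 - C (m:E) * X) * (1+X:E[X])^((m+1)*(k-r) - 1)))
            * (σ ((1:E[X])+X) * (σ ((1:E[X])+X))⁻¹) := by
        rw [hpp, map_mul, map_mul, map_pow, map_mul, hσX, hσC, map_mul, map_pow,
          map_pow (PowerSeries.C (R := E)) v r]
        ring
      rw [hform, hYu, mul_one, PowerSeries.coeff_C_mul]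
      have hxp := PowerSeries.coeff_X_pow_mul
        (σ ((1 - C (m:E) * X) * (1+X:E[X])^((m+1)*(k-r) - 1))) r (k-r)
      rw [show (k-r) + r = k from by omega] at hxp
      rw [hxp, hσc, hzero (k-r) hs1, mul_zero]
    rw [hrest, zero_add]
  have final : PowerSeries.coeff k (σ S * (σ ((1:E[X])+X))^N) = v^k - (N.choose k : E) := by
    rw [hS2]
    have e : (σ D - PowerSeries.X^(k+1) * σ B) * (σ g)⁻¹ * (σ ((1:E[X])+X))^N
        = σ D * (σ g)⁻¹ * (σ ((1:E[X])+X))^N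
          - PowerSeries.X^(k+1) * (σ B * (σ g)⁻¹ * (σ ((1:E[X])+X))^N) := by ring
    rw [e, st3, st4, map_sub, map_sub, map_add, zco, zco, hYN, eA]
    ring
  rw [← hσc, map_mul, map_pow]
  exact final

lemma sum_K_aux {E : Type*} [Field E] [CharZero E] (m k : ℕ) (hm : 1 ≤ m) (hk : 1 ≤ k)
    (v : E) (u : Fin (m+1) → E) (hinj : Function.Injective u)
    (hroot : ∀ i, (1 + u i) ^ (m+1) = v * (u i) ^ m) :
    ∑ i : Fin (m+1), ∑ j ∈ Finset.Icc 1 k, (Nat.choose ((m+1)*k) (k-j) : E) * (u i)^j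
      = v^k - (Nat.choose ((m+1)*k) k : E) := by
  classical
  have hu0 : ∀ i, u i ≠ 0 := by
    intro i h
    have h1 := hroot i
    rw [h, add_zero, one_pow, zero_pow (by omega : m ≠ 0), mul_zero] at h1
    exact one_ne_zero h1
  set N := (m+1)*k with hN
  set P : Fin (m+1) → E[X] := fun i => ∏ l ∈ Finset.univ.erase i, (1 - C (u l) * X) with hP
  set g : E[X] := ∏ i, (1 - C (u i) * X) with hgdef
  have hgP : ∀ i, g = (1 - C (u i) * X) * P i := fun i =>
    (Finset.mul_prod_erase Finset.univ _ (Finset.mem_univ i)).symm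
  have hg : g = (1 + X)^(m+1) - C v * X := by
    have hz : g - ((1 + X)^(m+1) - C v * X) = 0 := by
      apply Polynomial.eq_zero_of_natDegree_lt_card_of_eval_eq_zero' _
        (insert (0:E) (Finset.univ.image fun i => (u i)⁻¹))
      · intro x hx
        rcases Finset.mem_insert.mp hx with rfl | hx
        · simp [hgdef, Polynomial.eval_prod]
        · obtain ⟨i, -, rfl⟩ := Finset.mem_image.mp hx
          have hev : Polynomial.eval (u i)⁻¹ g = 0 := by
            rw [hgdef, Polynomial.eval_prod]
            apply Finset.prod_eq_zero (Finset.mem_univ i)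
            simp [mul_inv_cancel₀ (hu0 i)]
          rw [Polynomial.eval_sub, hev, zero_sub, neg_eq_zero]
          simp only [Polynomial.eval_sub, Polynomial.eval_pow, Polynomial.eval_add,
            Polynomial.eval_one, Polynomial.eval_X, Polynomial.eval_mul, Polynomial.eval_C]
          have hr := hroot i
          have hinv : (1 : E) + (u i)⁻¹ = (1 + u i) * (u i)⁻¹ := by
            rw [add_mul, one_mul, mul_inv_cancel₀ (hu0 i), add_comm]
          rw [hinv, mul_pow, hr, inv_pow, pow_succ, mul_inv]
          field_simp [hu0 i]
          ring
      · have h1 : g.natDegree ≤ m+1 := by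
          refine le_trans (Polynomial.natDegree_prod_le _ _) ?_
          refine le_trans (Finset.sum_le_card_nsmul _ _ 1 fun i _ => ?_) (by simp)
          compute_degree
        have h2 : ((1+X:E[X])^(m+1) - C v * X).natDegree ≤ m+1 := by compute_degree!
        have hcard : (insert (0:E) (Finset.univ.image fun i => (u i)⁻¹)).card = m+2 := by
          rw [Finset.card_insert_of_notMem, Finset.card_image_of_injective _
            (fun a b hab => hinj (inv_injective hab))]
          · simp
          · intro h0
            obtain ⟨i, -, hi⟩ := Finset.mem_image.mp h0
            exact hu0 i (inv_eq_zero.mp hi)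
        rw [hcard]
        have := Polynomial.natDegree_sub_le g ((1+X:E[X])^(m+1) - C v * X)
        omega
    linear_combination hz
  -- derivative computation
  have h1' : Polynomial.derivative g = ∑ i : Fin (m+1), P i * (- C (u i)) := by
    have h1 := derivative_finset_prod' Finset.univ (fun i : Fin (m+1) => (1 - C (u i) * X))
    have h2 : ∀ i : Fin (m+1), Polynomial.derivative (1 - C (u i) * X) = - C (u i) := by
      intro i; simp
    simp only [h2] at h1
    exact h1
  have hDval : ∑ i : Fin (m+1), C (u i) * P i = C v - C ((m:E)+1) * (1+X)^m := by
    rw [hg] at h1'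
    simp only [Polynomial.derivative_sub, Polynomial.derivative_pow, Polynomial.derivative_mul,
      Polynomial.derivative_C, Polynomial.derivative_X, Polynomial.derivative_add,
      Polynomial.derivative_one, zero_add, add_zero, mul_one, zero_mul, one_mul, mul_zero,
      Nat.add_sub_cancel] at h1'
    push_cast at h1'
    have hsum : ∑ i : Fin (m+1), P i * (-C (u i)) = -∑ i : Fin (m+1), C (u i) * P i := by
      rw [← Finset.sum_neg_distrib]
      apply Finset.sum_congr rfl
      intros; ring
    rw [hsum] at h1'
    linear_combination h1'
  have hDclosed : (∑ i : Fin (m+1), C (u i) * X * P i)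
      = C v * X - C ((m:E)+1) * (X * (1+X)^m) := by
    have hx : ∑ i : Fin (m+1), C (u i) * X * P i = X * ∑ i : Fin (m+1), C (u i) * P i := by
      rw [Finset.mul_sum]
      apply Finset.sum_congr rfl
      intros; ring
    rw [hx, hDval]
    ring
  have key1 : (∑ i : Fin (m+1), ∑ j ∈ Finset.Icc 1 k, C ((u i)^j) * X^j) * g
      = (∑ i : Fin (m+1), C (u i) * X * P i)
        - X^(k+1) * ∑ i : Fin (m+1), C ((u i)^(k+1)) * P i := by
    rw [Finset.sum_mul, Finset.mul_sum, ← Finset.sum_sub_distrib]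
    apply Finset.sum_congr rfl
    intro i _
    rw [hgP i]
    have hsum : ∑ j ∈ Finset.Icc 1 k, C ((u i)^j) * X^j
        = ∑ j ∈ Finset.Icc 1 k, (C (u i) * X)^j := by
      apply Finset.sum_congr rfl
      intros j _
      rw [map_pow, mul_pow]
    rw [hsum]
    simp only [map_pow]
    linear_combination (P i) * geom_Icc_mul (C (u i) * X) k
  have core := series_core m k hk v
      (∑ i : Fin (m+1), ∑ j ∈ Finset.Icc 1 k, C ((u i)^j) * X^j)
      (∑ i : Fin (m+1), C (u i) * X * P i)
      (∑ i : Fin (m+1), C ((u i)^(k+1)) * P i)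
      g hg hDclosed key1
  rw [← core]
  rw [Finset.sum_mul, Polynomial.finset_sum_coeff]
  apply Finset.sum_congr rfl
  intro i _
  rw [Finset.sum_mul, Polynomial.finset_sum_coeff]
  apply Finset.sum_congr rfl
  intro j hj
  have hjk : j ≤ k := (Finset.mem_Icc.mp hj).2
  rw [mul_assoc, Polynomial.coeff_C_mul]
  have hxp := Polynomial.coeff_X_pow_mul ((1+X:E[X])^((m+1)*k)) j (k-j)
  rw [show (k-j) + j = k from by omega] at hxp
  rw [hxp, Polynomial.coeff_one_add_X_pow]
  ring


/-- Let `m ≥ 1`, `F` a field of characteristic zero, `v = (1+u)^{m+1} u^{−m}`, and let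
`u_0 = u, u_1, …, u_m` be the `m+1` distinct roots of `(1+U)^{m+1} − v U^m` in a splitting
field over `F(u)`.  Then for every `k ≥ 1`,
`∑_{i=0}^{m} ∑_{j=1}^{k} binom((m+1)k, k−j) u_i^j = v^k − binom((m+1)k, k)`. -/
theorem sum_K_at_roots (F : Type*) [Field F] [CharZero F] (m : ℕ) (hm : 1 ≤ m)
    (E : Type*) [Field E] (φ : RatFunc F →+* E)
    (u : Fin (m + 1) → E) (hinj : Function.Injective u)
    (h0 : u 0 = φ RatFunc.X)
    (hroot : ∀ i, (1 + u i) ^ (m + 1)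
      = φ ((1 + RatFunc.X) ^ (m + 1) / RatFunc.X ^ m) * (u i) ^ m)
    (k : ℕ) (hk : 1 ≤ k) :
    ∑ i : Fin (m + 1), ∑ j ∈ Finset.Icc 1 k,
        (Nat.choose ((m + 1) * k) (k - j) : E) * (u i) ^ j
      = φ ((1 + RatFunc.X) ^ (m + 1) / RatFunc.X ^ m) ^ k
        - (Nat.choose ((m + 1) * k) k : E) := by
  have hF : CharZero (RatFunc F) :=
    (RingHom.charZero_iff (algebraMap F (RatFunc F)).injective).mp inferInstance
  letI : CharZero E := (RingHom.charZero_iff φ.injective).mp hF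
  exact sum_K_aux m k hm hk _ u hinj hroot
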